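/- Let T be a bounded linear operator on a complex Hilbert space H, x a unit vector, r ≥ 1 real. Then |⟨|T||T*|x,x⟩|^r ≤ (1/2)⟨(|T|^{2r} + |T*|^{2r})x,x⟩. -/

import Mathlib

set_option synthInstance.maxHeartbeats 1000000
set_option maxHeartbeats 1000000

open scoped InnerProductSpace NNReal

noncomputable def opAbs {H : Type*} [NormedAddCommGroup H] [InnerProductSpace ℂ H]
    [CompleteSpace H] (T : H →L[ℂ] H) : H →L[ℂ] H :=
  CFC.sqrt ((ContinuousLinearMap.adjoint T) * T)

noncomputable def numRadius {H : Type*} [NormedAddCommGroup H] [InnerProductSpace ℂ H]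
    (T : H →L[ℂ] H) : ℝ :=
  ⨆ x : {y : H // ‖y‖ = 1}, ‖⟪T (x : H), (x : H)⟫_ℂ‖


section Aux

variable {H : Type*} [NormedAddCommGroup H] [InnerProductSpace ℂ H] [CompleteSpace H]

lemma inner_re_mono {S P : H →L[ℂ] H} (h : S ≤ P) (x : H) :
    (⟪S x, x⟫_ℂ).re ≤ (⟪P x, x⟫_ℂ).re := by
  have h2 := ((ContinuousLinearMap.le_def S P).mp h).inner_nonneg_left x
  simp only [ContinuousLinearMap.sub_apply, inner_sub_left, map_sub, RCLike.re_to_complex] at h2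
  have h3 := (Complex.le_def.mp h2).1
  simp only [Complex.zero_re, Complex.sub_re] at h3
  linarith

lemma tangent_ineq {c t r : ℝ} (hc : 0 < c) (ht : 0 ≤ t) (hr : 1 ≤ r) :
    r * c ^ (r - 1) * t ≤ t ^ r + (r - 1) * c ^ r := by
  have hs : (-1 : ℝ) ≤ t / c - 1 := by
    have : 0 ≤ t / c := div_nonneg ht hc.le
    linarith
  have hb := one_add_mul_self_le_rpow_one_add hs hr
  have h1 : (1 : ℝ) + (t / c - 1) = t / c := by ring
  rw [h1] at hb
  rw [Real.div_rpow ht hc.le r] at hb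
  have hcr : (0 : ℝ) < c ^ r := Real.rpow_pos_of_pos hc r
  have h3 : c ^ (r - 1) = c ^ r / c := by
    rw [Real.rpow_sub hc, Real.rpow_one]
  have h4 := mul_le_mul_of_nonneg_left hb hcr.le
  rw [mul_div_cancel₀ _ hcr.ne'] at h4
  rw [h3]
  have hc' : c ≠ 0 := hc.ne'
  have h5 : c ^ r * (1 + r * (t / c - 1)) = c ^ r + r * (c ^ r / c) * t - r * c ^ r := by
    field_simp; ring
  rw [h5] at h4
  nlinarith

lemma mccarthy (a : H →L[ℂ] H) (ha : 0 ≤ a) {x : H} (hx : ‖x‖ = 1)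
    {r : ℝ} (hr : 1 ≤ r) :
    (⟪a x, x⟫_ℂ).re ^ r ≤ (⟪(CFC.rpow a r) x, x⟫_ℂ).re := by
  have hr0 : (0 : ℝ) ≤ r := by linarith
  set c := (⟪a x, x⟫_ℂ).re with hc_def
  have hc0 : 0 ≤ c := by
    exact (Complex.le_def.mp
      (((ContinuousLinearMap.nonneg_iff_isPositive a).mp ha).inner_nonneg_left x)).1
  have hRnn : 0 ≤ (⟪(CFC.rpow a r) x, x⟫_ℂ).re := by
    exact (Complex.le_def.mp
      (((ContinuousLinearMap.nonneg_iff_isPositive _).mp (CFC.rpow_nonneg (a := a) (y := r))).inner_nonneg_left x)).1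
  rcases hc0.eq_or_lt with hc | hc
  · rw [← hc, Real.zero_rpow (by linarith)]
    exact hRnn
  · -- c > 0
    set k : ℝ≥0 := (r * c ^ (r - 1)).toNNReal with hk_def
    set m : ℝ≥0 := ((r - 1) * c ^ r).toNNReal with hm_def
    have hk : (k : ℝ) = r * c ^ (r - 1) :=
      Real.coe_toNNReal _ (by positivity)
    have hm : (m : ℝ) = (r - 1) * c ^ r :=
      Real.coe_toNNReal _ (mul_nonneg (by linarith) (by positivity))
    have hscalar : ∀ t : ℝ≥0, (fun t : ℝ≥0 => k * t) t ≤ (fun t : ℝ≥0 => t ^ r + m) t := by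
      intro t
      simp only
      rw [← NNReal.coe_le_coe]
      push_cast [NNReal.coe_rpow]
      rw [hk, hm]
      exact tangent_ineq hc t.coe_nonneg hr
    have hcont : ContinuousOn (fun t : ℝ≥0 => t ^ r + m) (spectrum ℝ≥0 a) :=
      ((NNReal.continuous_rpow_const hr0).add continuous_const).continuousOn
    have hop : cfc (fun t : ℝ≥0 => k * t) a ≤ cfc (fun t : ℝ≥0 => t ^ r + m) a :=
      cfc_mono (fun t _ => hscalar t) (by fun_prop) hcont
    have hL : cfc (fun t : ℝ≥0 => k * t) a = k • a := cfc_const_mul_id k a ha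
    have hR : cfc (fun t : ℝ≥0 => t ^ r + m) a = CFC.rpow a r + m • (1 : H →L[ℂ] H) := by
      rw [cfc_add (a := a) (f := fun t : ℝ≥0 => t ^ r) (g := fun _ => m)
        ((NNReal.continuous_rpow_const hr0).continuousOn) (continuousOn_const)]
      rw [cfc_const m a ha, Algebra.algebraMap_eq_smul_one]
      rfl
    rw [hL, hR] at hop
    have key := inner_re_mono hop x
    have hLe : ((⟪(k • a) x, x⟫_ℂ)).re = (k : ℝ) * c := by
      rw [ContinuousLinearMap.smul_apply]
      rw [NNReal.smul_def, RCLike.real_smul_eq_coe_smul (K := ℂ), inner_smul_left]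
      simp [hc_def]
    have hRe : ((⟪(CFC.rpow a r + m • (1 : H →L[ℂ] H)) x, x⟫_ℂ)).re
        = (⟪(CFC.rpow a r) x, x⟫_ℂ).re + (m : ℝ) := by
      rw [ContinuousLinearMap.add_apply, inner_add_left]
      rw [ContinuousLinearMap.smul_apply, ContinuousLinearMap.one_apply]
      rw [NNReal.smul_def, RCLike.real_smul_eq_coe_smul (K := ℂ), inner_smul_left]
      have hxx : ⟪x, x⟫_ℂ = 1 := by
        rw [inner_self_eq_norm_sq_to_K, hx]; norm_num
      simp [hxx, hx]
    rw [hLe, hRe, hk, hm] at key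
    have hcrc : c ^ (r - 1) * c = c ^ r := by
      rw [← Real.rpow_add_one hc.ne' (r - 1)]
      norm_num
    nlinarith [key, hcrc]

lemma sq_inner (a : H →L[ℂ] H) (hsa : IsSelfAdjoint a) (y : H) :
    (⟪(a ^ 2) y, y⟫_ℂ).re = ‖a y‖ ^ 2 := by
  rw [sq, ContinuousLinearMap.mul_apply]
  have h : ⟪a (a y), y⟫_ℂ = ⟪a y, a y⟫_ℂ := by
    have h2 := ContinuousLinearMap.adjoint_inner_left a y (a y)
    rwa [hsa.adjoint_eq] at h2
  rw [h]
  exact_mod_cast inner_self_eq_norm_sq (𝕜 := ℂ) (a y)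

lemma final_arith {u v U V r w : ℝ} (hu : 0 ≤ u) (hv : 0 ≤ v)
    (hU : (u ^ 2) ^ r ≤ U) (hV : (v ^ 2) ^ r ≤ V) (hr0 : 0 ≤ r)
    (hw : 0 ≤ w) (hwle : w ≤ v * u) : w ^ r ≤ 1 / 2 * (U + V) := by
  have h1 : w ^ r ≤ (v * u) ^ r := Real.rpow_le_rpow hw hwle hr0
  have h2 : (v * u) ^ r = v ^ r * u ^ r := Real.mul_rpow hv hu
  have h3 : (u ^ 2 : ℝ) ^ r = (u ^ r) ^ 2 := by
    rw [← Real.rpow_natCast u 2, ← Real.rpow_natCast (u ^ r) 2,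
      ← Real.rpow_mul hu, ← Real.rpow_mul hu]
    norm_num [mul_comm]
  have h4 : (v ^ 2 : ℝ) ^ r = (v ^ r) ^ 2 := by
    rw [← Real.rpow_natCast v 2, ← Real.rpow_natCast (v ^ r) 2,
      ← Real.rpow_mul hv, ← Real.rpow_mul hv]
    norm_num [mul_comm]
  rw [h3] at hU
  rw [h4] at hV
  nlinarith [sq_nonneg (u ^ r - v ^ r), Real.rpow_nonneg hu r, Real.rpow_nonneg hv r]


end Aux

theorem stmt_10 {H : Type*} [NormedAddCommGroup H] [InnerProductSpace ℂ H] [CompleteSpace H]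
    (T : H →L[ℂ] H) (x : H) (hx : ‖x‖ = 1) (r : ℝ) (hr : 1 ≤ r) :
    ‖⟪(opAbs T) ((opAbs (ContinuousLinearMap.adjoint T)) x), x⟫_ℂ‖ ^ r ≤
      (1 / 2) * (⟪(CFC.rpow (opAbs T) (2 * r) +
          CFC.rpow (opAbs (ContinuousLinearMap.adjoint T)) (2 * r)) x, x⟫_ℂ).re := by
  have hr0 : (0 : ℝ) ≤ r := by linarith
  set A := opAbs T with hA_def
  set B := opAbs (ContinuousLinearMap.adjoint T) with hB_def
  have hA : (0 : H →L[ℂ] H) ≤ A := CFC.sqrt_nonneg _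
  have hB : (0 : H →L[ℂ] H) ≤ B := CFC.sqrt_nonneg _
  have hAsa : IsSelfAdjoint A := .of_nonneg hA
  have hBsa : IsSelfAdjoint B := .of_nonneg hB
  have hA2 : (0 : H →L[ℂ] H) ≤ A ^ 2 := by
    rw [sq]; nth_rewrite 2 [← hAsa.star_eq]
    exact mul_star_self_nonneg A
  have hB2 : (0 : H →L[ℂ] H) ≤ B ^ 2 := by
    rw [sq]; nth_rewrite 2 [← hBsa.star_eq]
    exact mul_star_self_nonneg B
  have hpowA : CFC.rpow (A ^ 2) r = CFC.rpow A (2 * r) := by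
    rw [show A ^ 2 = CFC.rpow A ((2 : ℕ) : ℝ) from (CFC.rpow_natCast A 2 hA).symm]
    rw [show ((2 : ℕ) : ℝ) = (2 : ℝ) by norm_num]
    exact CFC.rpow_rpow_of_exponent_nonneg A 2 r (by norm_num) hr0 hA
  have hpowB : CFC.rpow (B ^ 2) r = CFC.rpow B (2 * r) := by
    rw [show B ^ 2 = CFC.rpow B ((2 : ℕ) : ℝ) from (CFC.rpow_natCast B 2 hB).symm]
    rw [show ((2 : ℕ) : ℝ) = (2 : ℝ) by norm_num]
    exact CFC.rpow_rpow_of_exponent_nonneg B 2 r (by norm_num) hr0 hB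
  have hU := mccarthy (A ^ 2) hA2 hx hr
  have hV := mccarthy (B ^ 2) hB2 hx hr
  rw [sq_inner A hAsa x, hpowA] at hU
  rw [sq_inner B hBsa x, hpowB] at hV
  have hCS : ‖⟪A (B x), x⟫_ℂ‖ ≤ ‖B x‖ * ‖A x‖ := by
    have h : ⟪A (B x), x⟫_ℂ = ⟪B x, A x⟫_ℂ := by
      have h2 := ContinuousLinearMap.adjoint_inner_left A x (B x)
      rwa [hAsa.adjoint_eq] at h2
    rw [h]
    exact norm_inner_le_norm _ _
  have hsum : (⟪(CFC.rpow A (2 * r) + CFC.rpow B (2 * r)) x, x⟫_ℂ).re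
      = (⟪(CFC.rpow A (2 * r)) x, x⟫_ℂ).re + (⟪(CFC.rpow B (2 * r)) x, x⟫_ℂ).re := by
    rw [ContinuousLinearMap.add_apply, inner_add_left, Complex.add_re]
  rw [hsum]
  exact final_arith (norm_nonneg (A x)) (norm_nonneg (B x)) hU hV hr0
    (norm_nonneg _) hCS
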